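/- Let (Λ, μ) be a probability space and let a, a', b, b' : Λ → ℝ be measurable functions with |a(λ)| ≤ 1, |a'(λ)| ≤ 1, |b(λ)| ≤ 1 and |b'(λ)| ≤ 1 for all λ. Then |∫ a·b dμ + ∫ a·b' dμ + ∫ a'·b dμ − ∫ a'·b' dμ| ≤ 2. -/

import Mathlib

open MeasureTheory

lemma chsh_pointwise (u v w z : ℝ) (hu : |u| ≤ 1) (hv : |v| ≤ 1)
    (hw : |w| ≤ 1) (hz : |z| ≤ 1) :
    |u * w + u * z + v * w - v * z| ≤ 2 := by
  obtain ⟨hw1, hw2⟩ := abs_le.mp hw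
  obtain ⟨hz1, hz2⟩ := abs_le.mp hz
  have hwz : |w + z| + |w - z| ≤ 2 := by
    rcases le_total 0 (w + z) with h1 | h1 <;> rcases le_total 0 (w - z) with h2 | h2
    · rw [abs_of_nonneg h1, abs_of_nonneg h2]; linarith
    · rw [abs_of_nonneg h1, abs_of_nonpos h2]; linarith
    · rw [abs_of_nonpos h1, abs_of_nonneg h2]; linarith
    · rw [abs_of_nonpos h1, abs_of_nonpos h2]; linarith
  calc |u * w + u * z + v * w - v * z| = |u * (w + z) + v * (w - z)| := by ring_nf
    _ ≤ |u * (w + z)| + |v * (w - z)| := abs_add_le _ _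
    _ = |u| * |w + z| + |v| * |w - z| := by rw [abs_mul, abs_mul]
    _ ≤ 1 * |w + z| + 1 * |w - z| := by gcongr
    _ ≤ 2 := by simpa using hwz

lemma integrable_of_bdd {Λ : Type*} [MeasurableSpace Λ] {μ : Measure Λ}
    [IsProbabilityMeasure μ] {f g : Λ → ℝ} (hf : Measurable f) (hg : Measurable g)
    (h1 : ∀ x, |f x| ≤ 1) (h2 : ∀ x, |g x| ≤ 1) :
    Integrable (fun x => f x * g x) μ := by
  apply Integrable.mono' (integrable_const 1) ((hf.mul hg).aestronglyMeasurable)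
  filter_upwards with x
  simp only [Real.norm_eq_abs, Pi.mul_apply, abs_mul]
  calc |f x| * |g x| ≤ 1 * 1 := mul_le_mul (h1 x) (h2 x) (abs_nonneg _) zero_le_one
    _ = 1 := one_mul 1

/-- CHSH inequality for correlations in a local hidden-variables model. -/
theorem chsh_integral {Λ : Type*} [MeasurableSpace Λ] (μ : Measure Λ)
    [IsProbabilityMeasure μ] (a a' b b' : Λ → ℝ)
    (hma : Measurable a) (hma' : Measurable a')
    (hmb : Measurable b) (hmb' : Measurable b')
    (ha : ∀ x, |a x| ≤ 1) (ha' : ∀ x, |a' x| ≤ 1)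
    (hb : ∀ x, |b x| ≤ 1) (hb' : ∀ x, |b' x| ≤ 1) :
    |(∫ x, a x * b x ∂μ) + (∫ x, a x * b' x ∂μ) + (∫ x, a' x * b x ∂μ)
      - ∫ x, a' x * b' x ∂μ| ≤ 2 := by
  have i1 := integrable_of_bdd hma hmb ha hb (μ := μ)
  have i2 := integrable_of_bdd hma hmb' ha hb' (μ := μ)
  have i3 := integrable_of_bdd hma' hmb ha' hb (μ := μ)
  have i4 := integrable_of_bdd hma' hmb' ha' hb' (μ := μ)
  have e12 : ∫ x, (a x * b x + a x * b' x) ∂μ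
      = (∫ x, a x * b x ∂μ) + ∫ x, a x * b' x ∂μ := integral_add i1 i2
  have e123 : ∫ x, (a x * b x + a x * b' x + a' x * b x) ∂μ
      = (∫ x, (a x * b x + a x * b' x) ∂μ) + ∫ x, a' x * b x ∂μ :=
    integral_add (i1.add i2) i3
  have e : ∫ x, (a x * b x + a x * b' x + a' x * b x - a' x * b' x) ∂μ
      = (∫ x, (a x * b x + a x * b' x + a' x * b x) ∂μ) - ∫ x, a' x * b' x ∂μ :=
    integral_sub ((i1.add i2).add i3) i4
  rw [← e12, ← e123, ← e]
  calc |∫ x, (a x * b x + a x * b' x + a' x * b x - a' x * b' x) ∂μ|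
      ≤ ∫ x, |a x * b x + a x * b' x + a' x * b x - a' x * b' x| ∂μ := by
        simpa [Real.norm_eq_abs] using
          norm_integral_le_integral_norm (fun x => a x * b x + a x * b' x + a' x * b x - a' x * b' x) (μ := μ)
    _ ≤ ∫ _x, (2 : ℝ) ∂μ := by
        apply integral_mono_of_nonneg
        · filter_upwards with x using abs_nonneg _
        · exact integrable_const 2
        · filter_upwards with x using chsh_pointwise _ _ _ _ (ha x) (ha' x) (hb x) (hb' x)
    _ = 2 := by simp
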